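/- Let k ≥ 2 and m ≥ (432k)² be integers with m − k odd. Then the graph K^{k−2}_{2,(m−k−1)/2} * K₃ is minimally (k,k)-edge-connected. -/

import Mathlib

open SimpleGraph

/-- The `l`-edge-connectivity of a graph: the minimum number of edges whose removal
leaves a graph with at least `l` connected components, if the graph has at least `l`
vertices; otherwise the number of vertices. -/
noncomputable def edgeConnL {V : Type*} (l : ℕ) (G : SimpleGraph V) : ℕ :=
  if l ≤ Nat.card V then
    sInf {c : ℕ | ∃ F : Set (Sym2 V), F ⊆ G.edgeSet ∧ F.ncard = c ∧
      l ≤ Nat.card (G.deleteEdges F).ConnectedComponent}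
  else Nat.card V

/-- A graph is minimally `(k,l)`-edge-connected if it is connected, its
`l`-edge-connectivity is at least `k`, and deleting any edge drops the
`l`-edge-connectivity below `k`. -/
def IsMinimallyKLEdgeConnected {V : Type*} (k l : ℕ) (G : SimpleGraph V) : Prop :=
  G.Connected ∧ k ≤ edgeConnL l G ∧
    ∀ e ∈ G.edgeSet, edgeConnL l (G.deleteEdges {e}) < k

/-- The real adjacency matrix of a simple graph. -/
noncomputable def adjMat {V : Type*} (G : SimpleGraph V) : Matrix V V ℝ :=
  letI := Classical.decRel G.Adj
  G.adjMatrix ℝ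

/-- The spectral radius of a graph: the largest (real) eigenvalue of its adjacency matrix. -/
noncomputable def specRad {V : Type*} [Fintype V] [DecidableEq V]
    (G : SimpleGraph V) : ℝ :=
  sSup (spectrum ℝ (adjMat G))

abbrev KbookTriV (p s : ℕ) : Type := (Unit ⊕ Unit) ⊕ ((Fin s ⊕ Fin p) ⊕ Fin 2)

/-- `K^{p}_{2,s} * K₃`: the graph obtained from the disjoint union of the star `K_{1,p}`,
a triangle `K₃` and the complete bipartite graph `K_{2,s}` by identifying the centre of the
star, one vertex of the triangle and one of the two vertices of degree `s` of `K_{2,s}`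
into a single vertex.  Here `Sum.inl (Sum.inl _)` is the identified vertex,
`Sum.inl (Sum.inr _)` is the other vertex of the part of size two, `Fin s` is the part of
size `s`, `Fin p` are the pendant vertices and `Fin 2` are the other two triangle vertices. -/
def KbookTri (p s : ℕ) : SimpleGraph (KbookTriV p s) :=
  SimpleGraph.fromRel (fun a b =>
    match a, b with
    | Sum.inl (Sum.inl _), Sum.inr _ => True
    | Sum.inl (Sum.inr _), Sum.inr (Sum.inl (Sum.inl _)) => True
    | Sum.inr (Sum.inr _), Sum.inr (Sum.inr _) => True
    | _, _ => False)

namespace KK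
variable {p s : ℕ}
def vc : KbookTriV p s := Sum.inl (Sum.inl ())
def vb : KbookTriV p s := Sum.inl (Sum.inr ())
def vx (i : Fin s) : KbookTriV p s := Sum.inr (Sum.inl (Sum.inl i))
def vy (j : Fin p) : KbookTriV p s := Sum.inr (Sum.inl (Sum.inr j))
def vt (r : Fin 2) : KbookTriV p s := Sum.inr (Sum.inr r)

lemma adj_cx (i : Fin s) : (KbookTri p s).Adj vc (vx i) := by
  rw [KbookTri, SimpleGraph.fromRel_adj]
  exact ⟨by simp [vc, vx], Or.inl trivial⟩
lemma adj_cy (j : Fin p) : (KbookTri p s).Adj vc (vy j) := by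
  rw [KbookTri, SimpleGraph.fromRel_adj]
  exact ⟨by simp [vc, vy], Or.inl trivial⟩
lemma adj_ct (r : Fin 2) : (KbookTri p s).Adj vc (vt r) := by
  rw [KbookTri, SimpleGraph.fromRel_adj]
  exact ⟨by simp [vc, vt], Or.inl trivial⟩
lemma adj_bx (i : Fin s) : (KbookTri p s).Adj vb (vx i) := by
  rw [KbookTri, SimpleGraph.fromRel_adj]
  exact ⟨by simp [vb, vx], Or.inl trivial⟩
lemma adj_tt : (KbookTri p s).Adj (vt 0) (vt 1) := by
  rw [KbookTri, SimpleGraph.fromRel_adj]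
  exact ⟨by simp [vt], Or.inl trivial⟩

lemma nbr_y (j : Fin p) (u : KbookTriV p s) (h : (KbookTri p s).Adj (vy j) u) : u = vc := by
  rw [KbookTri, SimpleGraph.fromRel_adj] at h
  obtain ⟨hne, h | h⟩ := h <;>
    rcases u with (⟨⟩|⟨⟩)|((i|j')|r) <;> simp_all [vc, vb, vx, vy, vt]

lemma nbr_x (i : Fin s) (u : KbookTriV p s) (h : (KbookTri p s).Adj (vx i) u) :
    u = vc ∨ u = vb := by
  rw [KbookTri, SimpleGraph.fromRel_adj] at h
  obtain ⟨hne, h | h⟩ := h <;>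
    rcases u with (⟨⟩|⟨⟩)|((i'|j')|r) <;> simp_all [vc, vb, vx, vy, vt]

lemma nbr_t (r : Fin 2) (u : KbookTriV p s) (h : (KbookTri p s).Adj (vt r) u) :
    u = vc ∨ ∃ r', r' ≠ r ∧ u = vt r' := by
  rw [KbookTri, SimpleGraph.fromRel_adj] at h
  rcases u with (⟨⟩|⟨⟩)|((i'|j')|r') <;>
  obtain ⟨hne, h | h⟩ := h <;>
  first
    | exact (h : False).elim
    | exact Or.inl rfl
    | exact Or.inr ⟨r', fun hh => hne (by subst hh; rfl), rfl⟩

lemma nbr_b (u : KbookTriV p s) (h : (KbookTri p s).Adj vb u) : ∃ i, u = vx i := by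
  rw [KbookTri, SimpleGraph.fromRel_adj] at h
  obtain ⟨hne, h | h⟩ := h <;>
    rcases u with (⟨⟩|⟨⟩)|((i'|j')|r') <;> simp_all [vc, vb, vx, vy, vt]

lemma edge_cases (e : Sym2 (KbookTriV p s)) (he : e ∈ (KbookTri p s).edgeSet) :
    (∃ i, e = s(vc, vx i)) ∨ (∃ j, e = s(vc, vy j)) ∨ (∃ r, e = s(vc, vt r)) ∨
    (∃ i, e = s(vb, vx i)) ∨ e = s(vt 0, vt 1) := by
  induction e with
  | _ u v =>
    rw [SimpleGraph.mem_edgeSet] at he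
    rcases u with (⟨⟩|⟨⟩)|((i|j)|r) <;> rcases v with (⟨⟩|⟨⟩)|((i'|j')|r')
    all_goals rw [KbookTri, SimpleGraph.fromRel_adj] at he
    all_goals obtain ⟨hne, h | h⟩ := he
    all_goals first
      | (exact Or.inl ⟨i', rfl⟩)
      | (exact Or.inr (Or.inl ⟨j', rfl⟩))
      | (exact Or.inr (Or.inr (Or.inl ⟨r', rfl⟩)))
      | (exact Or.inr (Or.inr (Or.inr (Or.inl ⟨i', rfl⟩))))
      | (exact Or.inl ⟨i, Sym2.eq_swap⟩)
      | (exact Or.inr (Or.inl ⟨j, Sym2.eq_swap⟩))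
      | (exact Or.inr (Or.inr (Or.inl ⟨r, Sym2.eq_swap⟩)))
      | (exact Or.inr (Or.inr (Or.inr (Or.inl ⟨i, Sym2.eq_swap⟩))))
      | exact (h : False).elim
      | skip
    all_goals fin_cases r <;> fin_cases r' <;>
      first
        | (exact (hne rfl).elim)
        | (exact Or.inr (Or.inr (Or.inr (Or.inr rfl))))
        | (exact Or.inr (Or.inr (Or.inr (Or.inr Sym2.eq_swap))))

-- surjective coloring lower-bounds component count
lemma le_card_comp {V : Type*} [Finite V] (G : SimpleGraph V) {n : ℕ} (f : V → Fin n)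
    (hf : ∀ u v, G.Adj u v → f u = f v) (hs : Function.Surjective f) :
    n ≤ Nat.card G.ConnectedComponent := by
  have hr : ∀ u v, G.Reachable u v → f u = f v := by
    rintro u v ⟨w⟩
    induction w with
    | nil => rfl
    | cons a _ ih => exact (hf _ _ a).trans ih
  let g : G.ConnectedComponent → Fin n :=
    SimpleGraph.ConnectedComponent.lift f (fun u v pw _ => hr u v ⟨pw⟩)
  have hg : Function.Surjective g := by
    intro r
    obtain ⟨v, hv⟩ := hs r
    exact ⟨G.connectedComponentMk v, hv⟩
  simpa using Nat.card_le_card_of_surjective g hg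

-- covering set upper-bounds component count
lemma card_comp_le_of {V : Type*} [Finite V] (G : SimpleGraph V) (S : Finset V)
    (h : ∀ v, ∃ w ∈ S, G.Reachable v w) :
    Nat.card G.ConnectedComponent ≤ S.card := by
  have hsurj : Function.Surjective (fun w : S => G.connectedComponentMk w.1) := by
    intro cc
    induction cc using SimpleGraph.ConnectedComponent.ind with
    | _ v =>
      obtain ⟨w, hw, hr⟩ := h v
      exact ⟨⟨w, hw⟩, (SimpleGraph.ConnectedComponent.eq.mpr hr.symm)⟩
  calc Nat.card G.ConnectedComponent ≤ Nat.card S := Nat.card_le_card_of_surjective _ hsurj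
    _ = S.card := by simp [Nat.card_eq_fintype_card]
/-- coloring: special vertex `z` gets colour 1, pendant `j` gets `j+2`, rest 0 -/
def col (z : KbookTriV p s) (v : KbookTriV p s) : Fin (p + 2) :=
  if v = z then ⟨1, by omega⟩ else
  Sum.elim (fun _ => (⟨0, by omega⟩ : Fin (p + 2)))
    (Sum.elim
      (Sum.elim (fun _ => (⟨0, by omega⟩ : Fin (p + 2)))
        (fun j => (⟨j.1 + 2, by omega⟩ : Fin (p + 2))))
      (fun _ => (⟨0, by omega⟩ : Fin (p + 2)))) v

lemma col_eq_zero (z w : KbookTriV p s) (hz : w ≠ z) (hy : ∀ j, w ≠ vy j) :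
    col z w = ⟨0, by omega⟩ := by
  rw [col, if_neg hz]
  rcases w with (⟨⟩|⟨⟩)|((i|j)|r)
  · rfl
  · rfl
  · rfl
  · exact absurd rfl (hy j)
  · rfl

lemma comps_ge (z : KbookTriV p s) (hzc : z ≠ vc) (hzy : ∀ j, z ≠ vy j)
    (H : SimpleGraph (KbookTriV p s))
    (hpend : ∀ (j : Fin p) (u : KbookTriV p s), ¬ H.Adj (vy j) u)
    (hz : ∀ u, ¬ H.Adj z u) :
    p + 2 ≤ Nat.card H.ConnectedComponent := by
  apply le_card_comp H (col z)
  · intro u v huv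
    have hu : u ≠ z := fun h => hz v (h ▸ huv)
    have hv : v ≠ z := fun h => hz u (h ▸ huv.symm)
    have hyu : ∀ j, u ≠ vy j := fun j h => hpend j v (h ▸ huv)
    have hyv : ∀ j, v ≠ vy j := fun j h => hpend j u (h ▸ huv.symm)
    rw [col_eq_zero z u hu hyu, col_eq_zero z v hv hyv]
  · intro r
    obtain ⟨r, hr⟩ := r
    match r, hr with
    | 0, hr => exact ⟨vc, col_eq_zero z vc (Ne.symm hzc) (fun j h => by simp [vc, vy] at h)⟩
    | 1, hr => exact ⟨z, by rw [col, if_pos rfl]⟩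
    | (n+2), hr =>
      refine ⟨vy ⟨n, by omega⟩, ?_⟩
      rw [col, if_neg (fun h => hzy _ h.symm)]
      rfl

set_option maxHeartbeats 1000000 in
lemma comps_le (hs : 2 * (p + 2) ≤ s) (F : Set (Sym2 (KbookTriV p s)))
    (hFE : F ⊆ (KbookTri p s).edgeSet) (hcard : F.ncard ≤ p + 1) :
    Nat.card ((KbookTri p s).deleteEdges F).ConnectedComponent ≤ p + 1 := by
  classical
  set G' := (KbookTri p s).deleteEdges F with hG'
  have hfin : F.Finite := Set.toFinite F
  set FF : Finset (Sym2 (KbookTriV p s)) := hfin.toFinset with hFFdef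
  have hFFcard : FF.card ≤ p + 1 := by
    rwa [← Set.ncard_eq_toFinset_card F hfin]
  have hmemFF : ∀ e, e ∈ FF ↔ e ∈ F := fun e => hfin.mem_toFinset
  have hadj : ∀ u v, G'.Adj u v ↔ (KbookTri p s).Adj u v ∧ s(u, v) ∉ F := by
    intro u v; rw [hG', SimpleGraph.deleteEdges_adj]
  -- an untouched vertex of the big part
  have hT : ∃ i0 : Fin s, s(vc, vx i0) ∉ F ∧ s(vb, vx i0) ∉ F := by
    by_contra hco
    push_neg at hco
    have hsub : (Finset.univ : Finset (Fin s)) ⊆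
        Finset.univ.filter (fun i => s(vc, vx i) ∈ F) ∪
        Finset.univ.filter (fun i => s(vb, vx i) ∈ F) := by
      intro i _
      by_cases h1 : s(vc, vx i) ∈ F
      · exact Finset.mem_union_left _ (by simp [h1])
      · exact Finset.mem_union_right _ (by simp [hco i h1])
    have hc1 : (Finset.univ.filter (fun i : Fin s => s(vc, vx i) ∈ F)).card ≤ FF.card := by
      apply Finset.card_le_card_of_injOn (fun i => s(vc, vx i))
      · intro i hi; rw [Finset.mem_coe] at hi; rw [Finset.mem_coe, hmemFF]; exact (Finset.mem_filter.mp hi).2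
      · intro a _ b _ h; simpa [Sym2.eq_iff, vc, vx] using h
    have hc2 : (Finset.univ.filter (fun i : Fin s => s(vb, vx i) ∈ F)).card ≤ FF.card := by
      apply Finset.card_le_card_of_injOn (fun i => s(vb, vx i))
      · intro i hi; rw [Finset.mem_coe] at hi; rw [Finset.mem_coe, hmemFF]; exact (Finset.mem_filter.mp hi).2
      · intro a _ b _ h; simpa [Sym2.eq_iff, vb, vx] using h
    have := Finset.card_le_card hsub
    have hle := le_trans this (Finset.card_union_le _ _)
    simp only [Finset.card_univ, Fintype.card_fin] at hle
    omega
  obtain ⟨i0, hci0, hbi0⟩ := hT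
  have hreachb : G'.Reachable vb vc := by
    have h1 : G'.Adj vb (vx i0) := (hadj _ _).mpr ⟨adj_bx i0, hbi0⟩
    have h2 : G'.Adj (vx i0) vc :=
      (hadj _ _).mpr ⟨(adj_cx i0).symm, by rwa [Sym2.eq_swap]⟩
    exact h1.reachable.trans h2.reachable
  -- bad sets
  set badP : Finset (Fin p) :=
    Finset.univ.filter (fun j => ¬ G'.Reachable (vy j) vc) with hbadPdef
  set badX : Finset (Fin s) :=
    Finset.univ.filter (fun i => ¬ G'.Reachable (vx i) vc) with hbadXdef
  have hPedge : ∀ j ∈ badP, s(vc, vy j) ∈ F := by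
    intro j hj
    rw [hbadPdef, Finset.mem_filter] at hj
    by_contra hnot
    exact hj.2 ((hadj _ _).mpr ⟨(adj_cy j).symm, by rwa [Sym2.eq_swap]⟩).reachable
  have hXedge1 : ∀ i ∈ badX, s(vc, vx i) ∈ F := by
    intro i hi
    rw [hbadXdef, Finset.mem_filter] at hi
    by_contra hnot
    exact hi.2 ((hadj _ _).mpr ⟨(adj_cx i).symm, by rwa [Sym2.eq_swap]⟩).reachable
  have hXedge2 : ∀ i ∈ badX, s(vb, vx i) ∈ F := by
    intro i hi
    rw [hbadXdef, Finset.mem_filter] at hi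
    by_contra hnot
    exact hi.2 ((((hadj _ _).mpr ⟨(adj_bx i).symm, by rwa [Sym2.eq_swap]⟩)).reachable.trans hreachb)
  -- edge sets
  set EP : Finset (Sym2 (KbookTriV p s)) := badP.image (fun j => s(vc, vy j)) with hEPdef
  set EX1 : Finset (Sym2 (KbookTriV p s)) := badX.image (fun i => s(vc, vx i)) with hEX1def
  set EX2 : Finset (Sym2 (KbookTriV p s)) := badX.image (fun i => s(vb, vx i)) with hEX2def
  have hEPcard : EP.card = badP.card :=
    Finset.card_image_of_injective _ (fun a b h => by simpa [Sym2.eq_iff, vc, vy] using h)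
  have hEX1card : EX1.card = badX.card :=
    Finset.card_image_of_injective _ (fun a b h => by simpa [Sym2.eq_iff, vc, vx] using h)
  have hEX2card : EX2.card = badX.card :=
    Finset.card_image_of_injective _ (fun a b h => by simpa [Sym2.eq_iff, vb, vx] using h)
  have hd1 : Disjoint EP EX1 := by
    rw [Finset.disjoint_left]
    rintro a ha hb
    obtain ⟨j, _, rfl⟩ := Finset.mem_image.mp ha
    obtain ⟨i, _, heq⟩ := Finset.mem_image.mp hb
    simp [Sym2.eq_iff, vc, vx, vy] at heq
  have hd2 : Disjoint EP EX2 := by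
    rw [Finset.disjoint_left]
    rintro a ha hb
    obtain ⟨j, _, rfl⟩ := Finset.mem_image.mp ha
    obtain ⟨i, _, heq⟩ := Finset.mem_image.mp hb
    simp [Sym2.eq_iff, vb, vc, vx, vy] at heq
  have hd3 : Disjoint EX1 EX2 := by
    rw [Finset.disjoint_left]
    rintro a ha hb
    obtain ⟨i, _, rfl⟩ := Finset.mem_image.mp ha
    obtain ⟨i', _, heq⟩ := Finset.mem_image.mp hb
    simp [Sym2.eq_iff, vb, vc, vx] at heq
  set E012 : Finset (Sym2 (KbookTriV p s)) := EP ∪ EX1 ∪ EX2 with hE012def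
  have hE012card : E012.card = badP.card + 2 * badX.card := by
    rw [hE012def, Finset.card_union_of_disjoint, Finset.card_union_of_disjoint hd1,
      hEPcard, hEX1card, hEX2card]
    · ring
    · exact Finset.disjoint_union_left.mpr ⟨hd2, hd3⟩
  have hE012sub : E012 ⊆ FF := by
    intro a ha
    rw [hE012def] at ha
    rw [hmemFF]
    rcases Finset.mem_union.mp ha with ha | ha
    · rcases Finset.mem_union.mp ha with ha | ha
      · obtain ⟨j, hj, rfl⟩ := Finset.mem_image.mp ha; exact hPedge j hj
      · obtain ⟨i, hi, rfl⟩ := Finset.mem_image.mp ha; exact hXedge1 i hi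
    · obtain ⟨i, hi, rfl⟩ := Finset.mem_image.mp ha; exact hXedge2 i hi
  set e1 : Sym2 (KbookTriV p s) := s(vc, vt 0) with he1def
  set e2 : Sym2 (KbookTriV p s) := s(vc, vt 1) with he2def
  set e3 : Sym2 (KbookTriV p s) := s(vt 0, vt 1) with he3def
  have hdT : ∀ a ∈ E012, a ≠ e1 ∧ a ≠ e2 ∧ a ≠ e3 := by
    intro a ha
    rw [hE012def] at ha
    rcases Finset.mem_union.mp ha with ha | ha
    · rcases Finset.mem_union.mp ha with ha | ha
      · obtain ⟨j, _, rfl⟩ := Finset.mem_image.mp ha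
        refine ⟨?_, ?_, ?_⟩ <;> simp [he1def, he2def, he3def, Sym2.eq_iff, vc, vy, vt]
      · obtain ⟨i, _, rfl⟩ := Finset.mem_image.mp ha
        refine ⟨?_, ?_, ?_⟩ <;> simp [he1def, he2def, he3def, Sym2.eq_iff, vc, vx, vt]
    · obtain ⟨i, _, rfl⟩ := Finset.mem_image.mp ha
      refine ⟨?_, ?_, ?_⟩ <;> simp [he1def, he2def, he3def, Sym2.eq_iff, vb, vc, vx, vt]
  have hmain : ∀ ET : Finset (Sym2 (KbookTriV p s)), ET ⊆ FF →
      ET ⊆ {e1, e2, e3} → badP.card + 2 * badX.card + ET.card ≤ p + 1 := by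
    intro ET hTF hT3
    have hdisj : Disjoint E012 ET := by
      rw [Finset.disjoint_left]
      intro a ha haT
      obtain ⟨h1, h2, h3⟩ := hdT a ha
      rcases Finset.mem_insert.mp (hT3 haT) with h | h
      · exact h1 h
      · rcases Finset.mem_insert.mp h with h | h
        · exact h2 h
        · exact h3 (Finset.mem_singleton.mp h)
    calc badP.card + 2 * badX.card + ET.card
        = (E012 ∪ ET).card := by rw [Finset.card_union_of_disjoint hdisj, hE012card]
      _ ≤ FF.card := Finset.card_le_card (Finset.union_subset hE012sub hTF)
      _ ≤ p + 1 := hFFcard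
  -- the covering construction
  have hcovgen : ∀ (RT : Finset (KbookTriV p s)),
      (∀ r : Fin 2, ∃ w ∈ insert vc (badP.image vy ∪ badX.image vx ∪ RT),
        G'.Reachable (vt r) w) →
      Nat.card G'.ConnectedComponent ≤ 1 + (badP.card + badX.card + RT.card) := by
    intro RT hTr
    have hcov : ∀ v, ∃ w ∈ insert vc (badP.image vy ∪ badX.image vx ∪ RT),
        G'.Reachable v w := by
      intro v
      rcases v with (⟨⟩|⟨⟩)|((i|j)|r)
      · exact ⟨vc, Finset.mem_insert_self _ _, Reachable.refl _⟩
      · exact ⟨vc, Finset.mem_insert_self _ _, hreachb⟩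
      · by_cases hg : G'.Reachable (vx i) vc
        · exact ⟨vc, Finset.mem_insert_self _ _, hg⟩
        · refine ⟨vx i, ?_, Reachable.refl _⟩
          refine Finset.mem_insert_of_mem (Finset.mem_union_left _ (Finset.mem_union_right _ ?_))
          exact Finset.mem_image_of_mem _ (by simp [hbadXdef, hg])
      · by_cases hg : G'.Reachable (vy j) vc
        · exact ⟨vc, Finset.mem_insert_self _ _, hg⟩
        · refine ⟨vy j, ?_, Reachable.refl _⟩
          refine Finset.mem_insert_of_mem (Finset.mem_union_left _ (Finset.mem_union_left _ ?_))
          exact Finset.mem_image_of_mem _ (by simp [hbadPdef, hg])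
      · exact hTr r
    refine le_trans (card_comp_le_of G' _ hcov) ?_
    refine le_trans (Finset.card_insert_le _ _) ?_
    have := le_trans (Finset.card_union_le (badP.image vy ∪ badX.image vx) RT)
      (Nat.add_le_add_right (Finset.card_union_le _ _) _)
    have h1 := Finset.card_image_le (s := badP) (f := (vy : Fin p → KbookTriV p s))
    have h2 := Finset.card_image_le (s := badX) (f := (vx : Fin s → KbookTriV p s))
    omega
  -- triangle case analysis
  have hmemT : ∀ r : Fin 2, ∀ (RT : Finset (KbookTriV p s)), vt r ∈ RT →
      ∃ w ∈ insert vc (badP.image vy ∪ badX.image vx ∪ RT), G'.Reachable (vt r) w :=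
    fun r RT h => ⟨vt r, Finset.mem_insert_of_mem (Finset.mem_union_right _ h), Reachable.refl _⟩
  have he1F : ¬ G'.Reachable (vt 0) vc → e1 ∈ F := by
    intro hg
    by_contra hnot
    exact hg ((hadj _ _).mpr ⟨(adj_ct 0).symm, by rwa [Sym2.eq_swap, ← he1def]⟩).reachable
  have he2F : ¬ G'.Reachable (vt 1) vc → e2 ∈ F := by
    intro hg
    by_contra hnot
    exact hg ((hadj _ _).mpr ⟨(adj_ct 1).symm, by rwa [Sym2.eq_swap, ← he2def]⟩).reachable
  have hbadPle : badP.card ≤ p := le_trans (Finset.card_filter_le _ _) (by simp)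
  have hne12 : e1 ≠ e2 := by simp [he1def, he2def, Sym2.eq_iff, vc, vt]
  have hne13 : e1 ≠ e3 := by simp [he1def, he3def, Sym2.eq_iff, vc, vt]
  have hne23 : e2 ≠ e3 := by simp [he2def, he3def, Sym2.eq_iff, vc, vt]
  have he3F0 : G'.Reachable (vt 0) vc → ¬ G'.Reachable (vt 1) vc → e3 ∈ F := by
    intro hg0 hg1
    by_contra hnot
    refine hg1 (Reachable.trans ?_ hg0)
    exact ((hadj _ _).mpr ⟨adj_tt.symm, by rwa [Sym2.eq_swap, ← he3def]⟩).reachable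
  have he3F1 : ¬ G'.Reachable (vt 0) vc → G'.Reachable (vt 1) vc → e3 ∈ F := by
    intro hg0 hg1
    by_contra hnot
    refine hg0 (Reachable.trans ?_ hg1)
    exact ((hadj _ _).mpr ⟨adj_tt, by rwa [← he3def]⟩).reachable
  have he3Fr : ¬ G'.Reachable (vt 1) (vt 0) → e3 ∈ F := by
    intro hr
    by_contra hnot
    exact hr ((hadj _ _).mpr ⟨adj_tt.symm, by rwa [Sym2.eq_swap, ← he3def]⟩).reachable
  by_cases g0 : G'.Reachable (vt 0) vc <;> by_cases g1 : G'.Reachable (vt 1) vc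
  · -- both good
    refine le_trans (hcovgen ∅ ?_) ?_
    · intro r
      refine ⟨vc, Finset.mem_insert_self _ _, ?_⟩
      fin_cases r
      · exact g0
      · exact g1
    · have := hmain ∅ (by simp) (by simp)
      simp only [Finset.card_empty] at this ⊢
      by_cases hbx : badX.card = 0
      · omega
      · omega
  · -- g0 good, t1 bad
    refine le_trans (hcovgen {vt 1} ?_) ?_
    · intro r
      fin_cases r
      · exact ⟨vc, Finset.mem_insert_self _ _, g0⟩
      · exact hmemT 1 _ (Finset.mem_singleton_self _)
    · have hsubF : ({e2, e3} : Finset (Sym2 (KbookTriV p s))) ⊆ FF := by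
        intro a ha
        rw [hmemFF]
        rcases Finset.mem_insert.mp ha with rfl | ha
        · exact he2F g1
        · rw [Finset.mem_singleton.mp ha]; exact he3F0 g0 g1
      have hsub3 : ({e2, e3} : Finset (Sym2 (KbookTriV p s))) ⊆ {e1, e2, e3} := by
        intro a ha
        rcases Finset.mem_insert.mp ha with rfl | ha
        · exact Finset.mem_insert_of_mem (Finset.mem_insert_self _ _)
        · exact Finset.mem_insert_of_mem (Finset.mem_insert_of_mem ha)
      have hcd : ({e2, e3} : Finset (Sym2 (KbookTriV p s))).card = 2 := by
        rw [Finset.card_insert_of_notMem (by simp [hne23])]; simp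
      have := hmain {e2, e3} hsubF hsub3
      rw [hcd] at this
      simp only [Finset.card_singleton]
      omega
  · -- t0 bad, g1 good
    refine le_trans (hcovgen {vt 0} ?_) ?_
    · intro r
      fin_cases r
      · exact hmemT 0 _ (Finset.mem_singleton_self _)
      · exact ⟨vc, Finset.mem_insert_self _ _, g1⟩
    · have hsubF : ({e1, e3} : Finset (Sym2 (KbookTriV p s))) ⊆ FF := by
        intro a ha
        rw [hmemFF]
        rcases Finset.mem_insert.mp ha with rfl | ha
        · exact he1F g0
        · rw [Finset.mem_singleton.mp ha]; exact he3F1 g0 g1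
      have hsub3 : ({e1, e3} : Finset (Sym2 (KbookTriV p s))) ⊆ {e1, e2, e3} := by
        intro a ha
        rcases Finset.mem_insert.mp ha with rfl | ha
        · exact Finset.mem_insert_self _ _
        · exact Finset.mem_insert_of_mem (Finset.mem_insert_of_mem ha)
      have hcd : ({e1, e3} : Finset (Sym2 (KbookTriV p s))).card = 2 := by
        rw [Finset.card_insert_of_notMem (by simp [hne13])]; simp
      have := hmain {e1, e3} hsubF hsub3
      rw [hcd] at this
      simp only [Finset.card_singleton]
      omega
  · -- both bad
    by_cases r10 : G'.Reachable (vt 1) (vt 0)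
    · refine le_trans (hcovgen {vt 0} ?_) ?_
      · intro r
        fin_cases r
        · exact hmemT 0 _ (Finset.mem_singleton_self _)
        · exact ⟨vt 0, Finset.mem_insert_of_mem
            (Finset.mem_union_right _ (Finset.mem_singleton_self _)), r10⟩
      · have hsubF : ({e1, e2} : Finset (Sym2 (KbookTriV p s))) ⊆ FF := by
          intro a ha
          rw [hmemFF]
          rcases Finset.mem_insert.mp ha with rfl | ha
          · exact he1F g0
          · rw [Finset.mem_singleton.mp ha]; exact he2F g1
        have hsub3 : ({e1, e2} : Finset (Sym2 (KbookTriV p s))) ⊆ {e1, e2, e3} := by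
          intro a ha
          rcases Finset.mem_insert.mp ha with rfl | ha
          · exact Finset.mem_insert_self _ _
          · rw [Finset.mem_singleton.mp ha]
            exact Finset.mem_insert_of_mem (Finset.mem_insert_self _ _)
        have hcd : ({e1, e2} : Finset (Sym2 (KbookTriV p s))).card = 2 := by
          rw [Finset.card_insert_of_notMem (by simp [hne12])]; simp
        have := hmain {e1, e2} hsubF hsub3
        rw [hcd] at this
        simp only [Finset.card_singleton]
        omega
    · refine le_trans (hcovgen {vt 0, vt 1} ?_) ?_
      · intro r
        fin_cases r
        · exact hmemT 0 _ (by simp)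
        · exact hmemT 1 _ (by simp)
      · have hsubF : ({e1, e2, e3} : Finset (Sym2 (KbookTriV p s))) ⊆ FF := by
          intro a ha
          rw [hmemFF]
          rcases Finset.mem_insert.mp ha with rfl | ha
          · exact he1F g0
          · rcases Finset.mem_insert.mp ha with rfl | ha
            · exact he2F g1
            · rw [Finset.mem_singleton.mp ha]; exact he3Fr r10
        have hcd : ({e1, e2, e3} : Finset (Sym2 (KbookTriV p s))).card = 3 := by
          rw [Finset.card_insert_of_notMem (by simp [hne12, hne13]),
            Finset.card_insert_of_notMem (by simp [hne23])]
          simp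
        have hcd2 : ({vt 0, vt 1} : Finset (KbookTriV p s)).card = 2 := by
          rw [Finset.card_insert_of_notMem (by simp [vt])]; simp
        have := hmain {e1, e2, e3} hsubF (le_refl _)
        rw [hcd] at this
        rw [hcd2]
        omega

lemma mem_of_swap {α : Type*} {S : Finset (Sym2 α)} {a b : α} (h : s(a, b) ∈ S) :
    s(b, a) ∈ S := by rwa [Sym2.eq_swap]

lemma comps_ge_del (D : Set (Sym2 (KbookTriV p s))) (z : KbookTriV p s)
    (hz : z = vt 0 ∨ z = vt 1 ∨ ∃ i, z = vx i)
    (hpend : ∀ j : Fin p, s(vc, vy j) ∈ D)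
    (hzedge : ∀ u, (KbookTri p s).Adj z u → s(z, u) ∈ D) :
    p + 2 ≤ Nat.card ((KbookTri p s).deleteEdges D).ConnectedComponent := by
  have hzc : z ≠ vc := by
    rcases hz with rfl | rfl | ⟨i, rfl⟩ <;> simp [vt, vx, vc]
  have hzy : ∀ j, z ≠ vy j := by
    intro j
    rcases hz with rfl | rfl | ⟨i, rfl⟩ <;> simp [vt, vx, vy]
  apply comps_ge z hzc hzy
  · intro j u hadj
    rw [SimpleGraph.deleteEdges_adj] at hadj
    obtain ⟨hA, hn⟩ := hadj
    have hu : u = vc := nbr_y j u hA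
    subst hu
    exact hn (by rw [Sym2.eq_swap]; exact hpend j)
  · intro u hadj
    rw [SimpleGraph.deleteEdges_adj] at hadj
    exact hadj.2 (hzedge u hadj.1)

lemma aux (p s : ℕ) (hs : 2 * (p + 2) ≤ s) :
    IsMinimallyKLEdgeConnected (p + 2) (p + 2) (KbookTri p s) := by
  classical
  have hs1 : 0 < s := by omega
  -- connectivity
  have hreach : ∀ v : KbookTriV p s, (KbookTri p s).Reachable v vc := by
    intro v
    rcases v with (⟨⟩|⟨⟩)|((i|j)|r)
    · exact Reachable.refl _
    · exact (adj_bx ⟨0, hs1⟩).reachable.trans ((adj_cx ⟨0, hs1⟩).symm).reachable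
    · exact ((adj_cx i).symm).reachable
    · exact ((adj_cy j).symm).reachable
    · exact ((adj_ct r).symm).reachable
  have hconn : (KbookTri p s).Connected :=
    (connected_iff_exists_forall_reachable (G := KbookTri p s)).mpr ⟨vc, fun w => (hreach w).symm⟩
  -- cardinality of the vertex type
  have hVcard : Nat.card (KbookTriV p s) = s + p + 4 := by
    simp [Nat.card_eq_fintype_card]
    omega
  have hple : p + 2 ≤ Nat.card (KbookTriV p s) := by omega
  -- pendant edges
  set P : Finset (Sym2 (KbookTriV p s)) :=
    Finset.univ.image (fun j : Fin p => s(vc, vy j)) with hPdef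
  have hPcard : P.card = p := by
    rw [hPdef, Finset.card_image_of_injective _
      (fun a b h => by simpa [Sym2.eq_iff, vc, vy] using h)]
    simp
  have hPE : ∀ a ∈ P, a ∈ (KbookTri p s).edgeSet := by
    intro a ha
    obtain ⟨j, _, rfl⟩ := Finset.mem_image.mp ha
    exact (adj_cy j)
  have hPmem : ∀ j : Fin p, s(vc, vy j) ∈ P :=
    fun j => Finset.mem_image_of_mem _ (Finset.mem_univ j)
  refine ⟨hconn, ?_, ?_⟩
  · -- edgeConnL ≥ p + 2
    rw [edgeConnL, if_pos hple]
    have hF0 : ∃ c ∈ {c : ℕ | ∃ F : Set (Sym2 (KbookTriV p s)),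
        F ⊆ (KbookTri p s).edgeSet ∧ F.ncard = c ∧
        p + 2 ≤ Nat.card ((KbookTri p s).deleteEdges F).ConnectedComponent}, True := by
      set F0 : Finset (Sym2 (KbookTriV p s)) :=
        insert s(vc, vt 0) (insert s(vt 0, vt 1) P) with hF0def
      refine ⟨(↑F0 : Set (Sym2 (KbookTriV p s))).ncard, ⟨↑F0, ?_, rfl, ?_⟩, trivial⟩
      · intro a ha
        rw [Finset.mem_coe, hF0def] at ha
        rcases Finset.mem_insert.mp ha with rfl | ha
        · exact adj_ct 0
        · rcases Finset.mem_insert.mp ha with rfl | ha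
          · exact adj_tt
          · exact hPE a ha
      · apply comps_ge_del _ (vt 0) (Or.inl rfl)
        · intro j
          rw [Finset.mem_coe]
          exact Finset.mem_insert_of_mem (Finset.mem_insert_of_mem (hPmem j))
        · intro u hadj
          rcases nbr_t 0 u hadj with rfl | ⟨r', hr', rfl⟩
          · rw [Finset.mem_coe, Sym2.eq_swap]
            exact Finset.mem_insert_self _ _
          · have : r' = 1 := by omega
            subst this
            rw [Finset.mem_coe]
            exact Finset.mem_insert_of_mem (Finset.mem_insert_self _ _)
    obtain ⟨c0, hc0, -⟩ := hF0
    apply le_csInf ⟨c0, hc0⟩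
    intro b hb
    obtain ⟨F, hFE, hFc, hcomp⟩ := hb
    by_contra hlt
    push_neg at hlt
    have hb' : F.ncard ≤ p + 1 := by omega
    exact absurd hcomp (not_le.mpr (lt_of_le_of_lt (comps_le hs F hFE hb') (by omega)))
  · -- minimality
    intro e he
    have hmin : ∀ (Fe : Finset (Sym2 (KbookTriV p s))) (z : KbookTriV p s),
        (z = vt 0 ∨ z = vt 1 ∨ ∃ i, z = vx i) →
        (∀ a ∈ Fe, a ∈ (KbookTri p s).edgeSet) → e ∉ Fe → Fe.card = p + 1 →
        (∀ j : Fin p, s(vc, vy j) ∈ insert e Fe) →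
        (∀ u, (KbookTri p s).Adj z u → s(z, u) ∈ insert e Fe) →
        edgeConnL (p + 2) ((KbookTri p s).deleteEdges {e}) < p + 2 := by
      intro Fe z hz hFeE heFe hFec hpend hzedge
      rw [edgeConnL, if_pos hple]
      have hmem : (↑Fe : Set (Sym2 (KbookTriV p s))).ncard ∈
          {c : ℕ | ∃ F : Set (Sym2 (KbookTriV p s)),
          F ⊆ ((KbookTri p s).deleteEdges {e}).edgeSet ∧ F.ncard = c ∧
          p + 2 ≤ Nat.card (((KbookTri p s).deleteEdges {e}).deleteEdges F).ConnectedComponent} := by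
        refine ⟨↑Fe, ?_, rfl, ?_⟩
        · intro a ha
          rw [Finset.mem_coe] at ha
          rw [SimpleGraph.edgeSet_deleteEdges]
          exact ⟨hFeE a ha, fun h => heFe (h ▸ ha)⟩
        · rw [SimpleGraph.deleteEdges_deleteEdges]
          apply comps_ge_del _ z hz
          · intro j
            have := hpend j
            rcases Finset.mem_insert.mp this with h | h
            · exact Set.mem_union_left _ (by simp [h])
            · exact Set.mem_union_right _ (by simpa using h)
          · intro u hadj
            have := hzedge u hadj
            rcases Finset.mem_insert.mp this with h | h
            · exact Set.mem_union_left _ (by simp [h])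
            · exact Set.mem_union_right _ (by simpa using h)
      have := Nat.sInf_le hmem
      rw [Set.ncard_coe_finset, hFec] at this
      omega
    rcases edge_cases e he with ⟨i, rfl⟩ | ⟨j, rfl⟩ | ⟨r, rfl⟩ | ⟨i, rfl⟩ | rfl
    · -- e = s(vc, vx i)
      apply hmin (insert s(vb, vx i) P) (vx i) (Or.inr (Or.inr ⟨i, rfl⟩))
      · intro a ha
        rcases Finset.mem_insert.mp ha with rfl | ha
        · exact adj_bx i
        · exact hPE a ha
      · intro h
        rcases Finset.mem_insert.mp h with h | h
        · simp [Sym2.eq_iff, vb, vc, vx] at h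
        · obtain ⟨j, _, hj⟩ := Finset.mem_image.mp h
          simp [Sym2.eq_iff, vc, vx, vy] at hj
      · rw [Finset.card_insert_of_notMem, hPcard]
        intro h
        obtain ⟨j, _, hj⟩ := Finset.mem_image.mp h
        simp [Sym2.eq_iff, vb, vc, vx, vy] at hj
      · intro j
        exact Finset.mem_insert_of_mem (Finset.mem_insert_of_mem (hPmem j))
      · intro u hadj
        rcases nbr_x i u hadj with rfl | rfl
        · exact mem_of_swap (Finset.mem_insert_self _ _)
        · exact mem_of_swap (Finset.mem_insert_of_mem (Finset.mem_insert_self _ _))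
    · -- e = s(vc, vy j) : pendant edge
      apply hmin (insert s(vc, vt 0) (insert s(vt 0, vt 1) (P.erase s(vc, vy j)))) (vt 0)
        (Or.inl rfl)
      · intro a ha
        rcases Finset.mem_insert.mp ha with rfl | ha
        · exact adj_ct 0
        · rcases Finset.mem_insert.mp ha with rfl | ha
          · exact adj_tt
          · exact hPE a (Finset.mem_of_mem_erase ha)
      · intro h
        rcases Finset.mem_insert.mp h with h | h
        · simp [Sym2.eq_iff, vc, vy, vt] at h
        · rcases Finset.mem_insert.mp h with h | h
          · simp [Sym2.eq_iff, vc, vy, vt] at h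
          · exact (Finset.notMem_erase _ _) h
      · have hjP : s(vc, vy j) ∈ P := hPmem j
        have h1 : s(vt 0, vt 1) ∉ P.erase s(vc, vy j) := by
          intro h
          obtain ⟨j', _, hj⟩ := Finset.mem_image.mp (Finset.mem_of_mem_erase h)
          simp [Sym2.eq_iff, vc, vy, vt] at hj
        have h2 : s(vc, vt 0) ∉ insert s(vt 0, vt 1) (P.erase s(vc, vy j)) := by
          intro h
          rcases Finset.mem_insert.mp h with h | h
          · simp [Sym2.eq_iff, vc, vt] at h
          · obtain ⟨j', _, hj⟩ := Finset.mem_image.mp (Finset.mem_of_mem_erase h)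
            simp [Sym2.eq_iff, vc, vy, vt] at hj
        rw [Finset.card_insert_of_notMem h2, Finset.card_insert_of_notMem h1,
          Finset.card_erase_of_mem hjP, hPcard]
        have : 0 < p := j.pos
        omega
      · intro j'
        by_cases hjj : j' = j
        · subst hjj; exact Finset.mem_insert_self _ _
        · refine Finset.mem_insert_of_mem (Finset.mem_insert_of_mem
            (Finset.mem_insert_of_mem (Finset.mem_erase.mpr ⟨?_, hPmem j'⟩)))
          simp [Sym2.eq_iff, vc, vy, hjj]
      · intro u hadj
        rcases nbr_t 0 u hadj with rfl | ⟨r', hr', rfl⟩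
        · exact mem_of_swap (Finset.mem_insert_of_mem (Finset.mem_insert_self _ _))
        · have : r' = 1 := by omega
          subst this
          exact Finset.mem_insert_of_mem
            (Finset.mem_insert_of_mem (Finset.mem_insert_self _ _))
    · -- e = s(vc, vt r)
      apply hmin (insert s(vt 0, vt 1) P) (vt r)
        (by fin_cases r; exacts [Or.inl rfl, Or.inr (Or.inl rfl)])
      · intro a ha
        rcases Finset.mem_insert.mp ha with rfl | ha
        · exact adj_tt
        · exact hPE a ha
      · intro h
        rcases Finset.mem_insert.mp h with h | h
        · simp [Sym2.eq_iff, vc, vt] at h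
        · obtain ⟨j, _, hj⟩ := Finset.mem_image.mp h
          simp [Sym2.eq_iff, vc, vy, vt] at hj
      · rw [Finset.card_insert_of_notMem, hPcard]
        intro h
        obtain ⟨j, _, hj⟩ := Finset.mem_image.mp h
        simp [Sym2.eq_iff, vc, vy, vt] at hj
      · intro j
        exact Finset.mem_insert_of_mem (Finset.mem_insert_of_mem (hPmem j))
      · intro u hadj
        rcases nbr_t r u hadj with rfl | ⟨r', hr', rfl⟩
        · exact mem_of_swap (Finset.mem_insert_self _ _)
        · fin_cases r <;> fin_cases r'
          · exact absurd rfl hr'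
          · exact Finset.mem_insert_of_mem (Finset.mem_insert_self _ _)
          · exact mem_of_swap (Finset.mem_insert_of_mem (Finset.mem_insert_self _ _))
          · exact absurd rfl hr'
    · -- e = s(vb, vx i)
      apply hmin (insert s(vc, vx i) P) (vx i) (Or.inr (Or.inr ⟨i, rfl⟩))
      · intro a ha
        rcases Finset.mem_insert.mp ha with rfl | ha
        · exact adj_cx i
        · exact hPE a ha
      · intro h
        rcases Finset.mem_insert.mp h with h | h
        · simp [Sym2.eq_iff, vb, vc, vx] at h
        · obtain ⟨j, _, hj⟩ := Finset.mem_image.mp h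
          simp [Sym2.eq_iff, vb, vc, vx, vy] at hj
      · rw [Finset.card_insert_of_notMem, hPcard]
        intro h
        obtain ⟨j, _, hj⟩ := Finset.mem_image.mp h
        simp [Sym2.eq_iff, vc, vx, vy] at hj
      · intro j
        exact Finset.mem_insert_of_mem (Finset.mem_insert_of_mem (hPmem j))
      · intro u hadj
        rcases nbr_x i u hadj with rfl | rfl
        · exact mem_of_swap (Finset.mem_insert_of_mem (Finset.mem_insert_self _ _))
        · exact mem_of_swap (Finset.mem_insert_self _ _)
    · -- e = s(vt 0, vt 1)
      apply hmin (insert s(vc, vt 0) P) (vt 0) (Or.inl rfl)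
      · intro a ha
        rcases Finset.mem_insert.mp ha with rfl | ha
        · exact adj_ct 0
        · exact hPE a ha
      · intro h
        rcases Finset.mem_insert.mp h with h | h
        · simp [Sym2.eq_iff, vc, vt] at h
        · obtain ⟨j, _, hj⟩ := Finset.mem_image.mp h
          simp [Sym2.eq_iff, vc, vy, vt] at hj
      · rw [Finset.card_insert_of_notMem, hPcard]
        intro h
        obtain ⟨j, _, hj⟩ := Finset.mem_image.mp h
        simp [Sym2.eq_iff, vc, vy, vt] at hj
      · intro j
        exact Finset.mem_insert_of_mem (Finset.mem_insert_of_mem (hPmem j))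
      · intro u hadj
        rcases nbr_t 0 u hadj with rfl | ⟨r', hr', rfl⟩
        · exact mem_of_swap (Finset.mem_insert_of_mem (Finset.mem_insert_self _ _))
        · have : r' = 1 := by omega
          subst this
          exact Finset.mem_insert_self _ _

end KK

/-- Let `k ≥ 2` and `m ≥ (432k)²` with `m − k` odd.  Then the graph
`K^{k−2}_{2,(m−k−1)/2} * K₃` is minimally `(k,k)`-edge-connected. -/
theorem KbookTri_isMinimallyKKEdgeConnected (k m : ℕ) (hk : 2 ≤ k)
    (hm : (432 * k) ^ 2 ≤ m) (hpar : (m - k) % 2 = 1) :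
    IsMinimallyKLEdgeConnected k k (KbookTri (k - 2) ((m - k - 1) / 2)) := by
  have hm5 : 5 * k + 1 ≤ m := by nlinarith [Nat.mul_le_mul_right k hk]
  have hs : 2 * ((k - 2) + 2) ≤ (m - k - 1) / 2 := by
    rw [Nat.le_div_iff_mul_le (by norm_num)]
    omega
  have h := KK.aux (k - 2) ((m - k - 1) / 2) hs
  have hp : k - 2 + 2 = k := by omega
  rwa [hp] at h
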